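/- Let β : (0, π/4] → ℝ be a measurable nonnegative function, not almost everywhere zero, such that θ ↦ β(θ)·θ² is integrable on (0, π/4]. Define λ_n = ∫_{0}^{π/4} β(θ)(1 − (sin θ)^{2n} − (cos θ)^{2n}) dθ for n ∈ ℕ. Then for all integers k, l ≥ 2, λ_k + λ_l > λ_{k+l}. -/

import Mathlib

open Real MeasureTheory

lemma alg_key (a : ℝ) (ha0 : 0 < a) (ha1 : a < 1) (k l : ℕ) (hk : 2 ≤ k) (hl : 2 ≤ l) :
    1 - a ^ (k + l) - (1 - a) ^ (k + l) <
      (1 - a ^ k - (1 - a) ^ k) + (1 - a ^ l - (1 - a) ^ l) := by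
  set b := 1 - a with hb
  have hb0 : 0 < b := by simp [hb]; linarith
  have hb1 : b < 1 := by simp [hb]; linarith
  have hak : a ^ k ≤ a ^ 2 := pow_le_pow_of_le_one ha0.le ha1.le hk
  have hal : a ^ l ≤ a ^ 2 := pow_le_pow_of_le_one ha0.le ha1.le hl
  have hbk : b ^ k ≤ b ^ 2 := pow_le_pow_of_le_one hb0.le hb1.le hk
  have hbl : b ^ l ≤ b ^ 2 := pow_le_pow_of_le_one hb0.le hb1.le hl
  have ha2 : a ^ 2 ≤ 1 := pow_le_one₀ ha0.le ha1.le
  have hb2 : b ^ 2 ≤ 1 := pow_le_one₀ hb0.le hb1.le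
  have h1 : (1 - a ^ 2) * (1 - a ^ 2) ≤ (1 - a ^ k) * (1 - a ^ l) :=
    mul_le_mul (by linarith) (by linarith) (by linarith) (by linarith)
  have h2 : (1 - b ^ 2) * (1 - b ^ 2) ≤ (1 - b ^ k) * (1 - b ^ l) :=
    mul_le_mul (by linarith) (by linarith) (by linarith) (by linarith)
  have hid : (1 - a ^ 2) * (1 - a ^ 2) + (1 - b ^ 2) * (1 - b ^ 2) - 1
      = 2 * (a ^ 2) * (b ^ 2) := by rw [hb]; ring
  have hpos : 0 < 2 * (a ^ 2) * (b ^ 2) := by positivity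
  rw [pow_add, pow_add]
  nlinarith [h1, h2]

lemma g_bounds {θ : ℝ} (hθ : θ ∈ Set.Ioc (0 : ℝ) (π / 4)) (n : ℕ) (hn : 1 ≤ n) :
    0 ≤ 1 - sin θ ^ (2 * n) - cos θ ^ (2 * n) ∧
      1 - sin θ ^ (2 * n) - cos θ ^ (2 * n) ≤ n * θ ^ 2 := by
  have hθπ : θ < π / 2 := lt_of_le_of_lt hθ.2 (by linarith [pi_pos])
  have hs0 : 0 < sin θ := sin_pos_of_pos_of_lt_pi hθ.1 (by linarith [pi_pos])
  have hc0 : 0 < cos θ := cos_pos_of_mem_Ioo ⟨by linarith [pi_pos, hθ.1], hθπ⟩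
  set a := sin θ ^ 2 with hadef
  have hab : cos θ ^ 2 = 1 - a := by
    have := sin_sq_add_cos_sq θ; linarith
  have ha0 : 0 < a := by positivity
  have ha1 : a < 1 := by nlinarith
  have hsa : sin θ ^ (2 * n) = a ^ n := by rw [pow_mul]
  have hca : cos θ ^ (2 * n) = (1 - a) ^ n := by rw [pow_mul, hab]
  rw [hsa, hca]
  constructor
  · have h1 : a ^ n ≤ a ^ 1 := pow_le_pow_of_le_one ha0.le ha1.le hn
    have h2 : (1 - a) ^ n ≤ (1 - a) ^ 1 :=
      pow_le_pow_of_le_one (by linarith) (by linarith) hn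
    simp only [pow_one] at h1 h2
    linarith
  · have hbern : 1 + (n : ℝ) * ((1 - a) - 1) ≤ (1 + ((1 - a) - 1)) ^ n :=
      one_add_mul_le_pow (by linarith) n
    have h3 : 1 - (1 - a) ^ n ≤ n * a := by
      have : (1 + ((1 - a) - 1)) = 1 - a := by ring
      rw [this] at hbern; nlinarith
    have h4 : sin θ ≤ θ := Real.sin_le hθ.1.le
    have h5 : a ≤ θ ^ 2 := by
      rw [hadef]
      exact pow_le_pow_left₀ hs0.le h4 2
    have han : 0 ≤ a ^ n := by positivity
    have hn0 : (0:ℝ) ≤ n := n.cast_nonneg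
    nlinarith

lemma g_integrable (β : ℝ → ℝ) (hmeas : Measurable β)
    (hnonneg : ∀ θ ∈ Set.Ioc (0 : ℝ) (π / 4), 0 ≤ β θ)
    (hint : IntegrableOn (fun θ => β θ * θ ^ 2) (Set.Ioc (0 : ℝ) (π / 4)))
    (n : ℕ) (hn : 1 ≤ n) :
    IntegrableOn (fun θ => β θ * (1 - sin θ ^ (2 * n) - cos θ ^ (2 * n)))
      (Set.Ioc (0 : ℝ) (π / 4)) := by
  apply Integrable.mono (hint.const_mul (n : ℝ))
  · apply Measurable.aestronglyMeasurable
    exact hmeas.mul ((measurable_const.sub ((measurable_sin.pow_const _))).sub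
      (measurable_cos.pow_const _))
  · filter_upwards [ae_restrict_mem measurableSet_Ioc] with θ hθ
    obtain ⟨hg0, hg1⟩ := g_bounds hθ n hn
    have hβ := hnonneg θ hθ
    have hθ2 : (0:ℝ) ≤ θ ^ 2 := sq_nonneg θ
    rw [Real.norm_eq_abs, Real.norm_eq_abs, abs_of_nonneg (mul_nonneg hβ hg0)]
    calc β θ * (1 - sin θ ^ (2 * n) - cos θ ^ (2 * n)) ≤ β θ * ((n : ℝ) * θ ^ 2) :=
          mul_le_mul_of_nonneg_left hg1 hβ
      _ = (n : ℝ) * (β θ * θ ^ 2) := by ring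
      _ ≤ |(n : ℝ) * (β θ * θ ^ 2)| := le_abs_self _

theorem stmt_1 (β : ℝ → ℝ) (hmeas : Measurable β)
    (hnonneg : ∀ θ ∈ Set.Ioc (0 : ℝ) (π / 4), 0 ≤ β θ)
    (hne : ¬ (β =ᵐ[volume.restrict (Set.Ioc (0 : ℝ) (π / 4))] 0))
    (hint : IntegrableOn (fun θ => β θ * θ ^ 2) (Set.Ioc (0 : ℝ) (π / 4)))
    (lam : ℕ → ℝ)
    (hlam : ∀ n : ℕ, lam n =
      ∫ θ in Set.Ioc (0 : ℝ) (π / 4),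
        β θ * (1 - (Real.sin θ) ^ (2 * n) - (Real.cos θ) ^ (2 * n)))
    (k l : ℕ) (hk : 2 ≤ k) (hl : 2 ≤ l) :
    lam (k + l) < lam k + lam l := by
  set S : Set ℝ := Set.Ioc (0 : ℝ) (π / 4) with hS
  set μ : Measure ℝ := volume.restrict S with hμ
  set F : ℝ → ℝ := fun θ => β θ *
    ((1 - sin θ ^ (2 * k) - cos θ ^ (2 * k)) + (1 - sin θ ^ (2 * l) - cos θ ^ (2 * l))
      - (1 - sin θ ^ (2 * (k + l)) - cos θ ^ (2 * (k + l)))) with hF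
  -- pointwise positivity of the bracket on S
  have hGpos : ∀ θ ∈ S, 0 < (1 - sin θ ^ (2 * k) - cos θ ^ (2 * k))
      + (1 - sin θ ^ (2 * l) - cos θ ^ (2 * l))
      - (1 - sin θ ^ (2 * (k + l)) - cos θ ^ (2 * (k + l))) := by
    intro θ hθ
    have hθπ : θ < π / 2 := lt_of_le_of_lt hθ.2 (by linarith [pi_pos])
    have hs0 : 0 < sin θ := sin_pos_of_pos_of_lt_pi hθ.1 (by linarith [pi_pos])
    have hc0 : 0 < cos θ := cos_pos_of_mem_Ioo ⟨by linarith [pi_pos, hθ.1], hθπ⟩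
    have hab : cos θ ^ 2 = 1 - sin θ ^ 2 := by
      have := sin_sq_add_cos_sq θ; linarith
    have ha0 : 0 < sin θ ^ 2 := by positivity
    have ha1 : sin θ ^ 2 < 1 := by nlinarith
    have key := alg_key (sin θ ^ 2) ha0 ha1 k l hk hl
    simp only [pow_mul, hab] at *
    linarith [key]
  have hik := g_integrable β hmeas hnonneg hint k (by omega)
  have hil := g_integrable β hmeas hnonneg hint l (by omega)
  have hikl := g_integrable β hmeas hnonneg hint (k + l) (by omega)
  have hFint : Integrable F μ := by
    have : F = (fun θ => (β θ * (1 - sin θ ^ (2 * k) - cos θ ^ (2 * k)) +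
        β θ * (1 - sin θ ^ (2 * l) - cos θ ^ (2 * l))) -
        β θ * (1 - sin θ ^ (2 * (k + l)) - cos θ ^ (2 * (k + l)))) := by
      funext θ; simp only [hF]; ring
    rw [this]
    exact ((hik.add hil).sub hikl)
  have hFnn : 0 ≤ᵐ[μ] F := by
    filter_upwards [ae_restrict_mem measurableSet_Ioc] with θ hθ
    exact mul_nonneg (hnonneg θ hθ) (hGpos θ hθ).le
  have hpos : 0 < ∫ θ, F θ ∂μ := by
    rw [integral_pos_iff_support_of_nonneg_ae hFnn hFint]
    have hsub : {θ | β θ ≠ 0} ⊆ Function.support F ∪ Sᶜ := by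
      intro θ hθβ
      by_cases hθS : θ ∈ S
      · left
        exact mul_ne_zero hθβ (ne_of_gt (hGpos θ hθS))
      · right; exact hθS
    have hne' : μ {θ | β θ ≠ 0} ≠ 0 := by
      intro h0
      apply hne
      rw [Filter.EventuallyEq, ae_iff]
      simpa using h0
    have hSc : μ Sᶜ = 0 := by
      rw [hμ, Measure.restrict_apply (measurableSet_Ioc.compl)]
      rw [Set.compl_inter_self, measure_empty]
    have : μ {θ | β θ ≠ 0} ≤ μ (Function.support F) := by
      calc μ {θ | β θ ≠ 0} ≤ μ (Function.support F ∪ Sᶜ) := measure_mono hsub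
        _ ≤ μ (Function.support F) + μ Sᶜ := measure_union_le _ _
        _ = μ (Function.support F) := by rw [hSc, add_zero]
    exact lt_of_lt_of_le (pos_iff_ne_zero.mpr hne') this
  have hsplit : ∫ θ, F θ ∂μ = lam k + lam l - lam (k + l) := by
    rw [hlam k, hlam l, hlam (k + l)]
    have : ∫ θ, F θ ∂μ = ∫ θ, ((β θ * (1 - sin θ ^ (2 * k) - cos θ ^ (2 * k)) +
        β θ * (1 - sin θ ^ (2 * l) - cos θ ^ (2 * l))) -
        β θ * (1 - sin θ ^ (2 * (k + l)) - cos θ ^ (2 * (k + l)))) ∂μ := by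
      congr 1; funext θ; simp only [hF]; ring
    have h1 : Integrable (fun θ => β θ * (1 - sin θ ^ (2 * k) - cos θ ^ (2 * k)) +
        β θ * (1 - sin θ ^ (2 * l) - cos θ ^ (2 * l))) μ := hik.add hil
    rw [this, integral_sub h1 hikl, integral_add hik hil]
  linarith [hsplit ▸ hpos]
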